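/- arXiv:quant-ph/0007051 — 2 statements merged into one kernel-verified Lean document; each statement's English description precedes it below -/
import Mathlib

section
/- For every δ ∈ [0,1] and every c ∈ (0,1): H₂(δ) − δ·log₂(1/c) ≤ log₂(1+c) − 0, equivalently 2^{H₂(δ)} · c^{δ} ≤ 1 + c. -/
/-- The binary entropy function. -/
noncomputable def binEnt (x : ℝ) : ℝ := -x * Real.logb 2 x - (1 - x) * Real.logb 2 (1 - x)

theorem entropy_exp_inequality (δ c : ℝ) (hδ : δ ∈ Set.Icc (0 : ℝ) 1)
    (hc : c ∈ Set.Ioo (0 : ℝ) 1) :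
    (2 : ℝ) ^ (binEnt δ) * c ^ δ ≤ 1 + c := by
  obtain ⟨hδ0, hδ1⟩ := hδ
  obtain ⟨hc0, hc1⟩ := hc
  rcases eq_or_lt_of_le hδ0 with h0 | h0
  · simp [binEnt, ← h0]
    linarith
  rcases eq_or_lt_of_le hδ1 with h1 | h1
  · rw [h1]; simp [binEnt]
  have h1δ : 0 < 1 - δ := by linarith
  -- rewrite 2 ^ binEnt δ
  have key : (2 : ℝ) ^ (binEnt δ) * c ^ δ = (c / δ) ^ δ * (1 / (1 - δ)) ^ (1 - δ) := by
    rw [binEnt, sub_eq_add_neg, Real.rpow_add two_pos]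
    rw [show -δ * Real.logb 2 δ = Real.logb 2 δ * (-δ) by ring,
        show -((1 - δ) * Real.logb 2 (1 - δ)) = Real.logb 2 (1 - δ) * (-(1 - δ)) by ring,
        Real.rpow_mul (by norm_num), Real.rpow_mul (by norm_num),
        Real.rpow_logb two_pos (by norm_num) h0,
        Real.rpow_logb two_pos (by norm_num) h1δ,
        Real.div_rpow hc0.le hδ0, Real.div_rpow zero_le_one h1δ.le,
        Real.rpow_neg hδ0, Real.rpow_neg h1δ.le, Real.one_rpow]
    field_simp
  rw [key]
  have := Real.geom_mean_le_arith_mean2_weighted (p₂ := 1/(1-δ)) hδ0 h1δ.le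
    (div_nonneg hc0.le hδ0) (by positivity) (by ring)
  calc (c / δ) ^ δ * (1 / (1 - δ)) ^ (1 - δ) ≤ δ * (c / δ) + (1 - δ) * (1 / (1 - δ)) := this
    _ = 1 + c := by field_simp; ring
end

section
/- For c ∈ (0,1) and rates R ≤ R_ex = 1 − H₂(c/(1+c)), the minimum of f(δ) = δ·log₂(1/c) − H₂(δ) + 1 − R over δ ∈ [H₂^{-1}(1−R), 1] is attained at δ = H₂^{-1}(1−R) and equals log₂(1/c)·H₂^{-1}(1−R), where H₂^{-1} is the inverse of H₂ on [0,1/2]. -/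
lemma binEnt_eq (x : ℝ) : binEnt x = Real.binEntropy x / Real.log 2 := by
  simp [binEnt, Real.binEntropy, Real.logb, Real.log_inv]
  ring

lemma aux_mono (c : ℝ) (hc : c ∈ Set.Ioo (0 : ℝ) 1) :
    MonotoneOn (fun x : ℝ => x * Real.log (1 / c) - Real.binEntropy x)
      (Set.Icc (c / (1 + c)) 1) := by
  obtain ⟨hc0, hc1⟩ := hc
  have hden : (0:ℝ) < 1 + c := by linarith
  have hlb : 0 < c / (1 + c) := div_pos hc0 hden
  apply monotoneOn_of_deriv_nonneg (convex_Icc _ _)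
  · exact (Continuous.sub (by fun_prop) Real.binEntropy_continuous).continuousOn
  · intro x hx
    rw [interior_Icc] at hx
    exact ((differentiableAt_id.mul_const _).sub
      (Real.differentiableAt_binEntropy (ne_of_gt (lt_trans hlb hx.1)) (ne_of_lt hx.2))).differentiableWithinAt
  · intro x hx
    rw [interior_Icc] at hx
    obtain ⟨hx1, hx2⟩ := hx
    have hx0 : 0 < x := lt_trans hlb hx1
    have hd := ((hasDerivAt_id x).mul_const (Real.log (1 / c))).sub
      ((Real.differentiableAt_binEntropy (ne_of_gt hx0) (ne_of_lt hx2)).hasDerivAt)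
    simp only [id_eq] at hd
    rw [show (fun x => x * Real.log (1 / c) - Real.binEntropy x) = ((fun y => y * Real.log (1 / c)) - Real.binEntropy) from rfl, hd.deriv, Real.deriv_binEntropy, one_mul]
    have h1 : c * (1 - x) ≤ x := by
      have := (div_lt_iff₀ hden).mp hx1
      nlinarith
    have h2 : Real.log (c * (1 - x)) ≤ Real.log x :=
      Real.log_le_log (by nlinarith) h1
    rw [Real.log_mul (ne_of_gt hc0) (by linarith)] at h2
    rw [Real.log_div one_ne_zero (ne_of_gt hc0), Real.log_one]
    linarith

theorem expurgated_minimum_at_GV (c R δGV : ℝ) (hc : c ∈ Set.Ioo (0 : ℝ) 1)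
    (hδGV : δGV ∈ Set.Icc (0 : ℝ) (1 / 2)) (hGV : binEnt δGV = 1 - R)
    (hR : c / (1 + c) ≤ δGV) :
    (∀ δ ∈ Set.Icc δGV 1,
      δ * Real.logb 2 (1 / c) - binEnt δ + (1 - R) ≥ δGV * Real.logb 2 (1 / c)) ∧
    δGV * Real.logb 2 (1 / c) - binEnt δGV + (1 - R) = δGV * Real.logb 2 (1 / c) := by
  have hlog2 : (0:ℝ) < Real.log 2 := Real.log_pos (by norm_num)
  constructor
  · intro δ hδ
    obtain ⟨h1, h2⟩ := hδ
    have hmem1 : δGV ∈ Set.Icc (c / (1 + c)) 1 := ⟨hR, by linarith [hδGV.2]⟩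
    have hmem2 : δ ∈ Set.Icc (c / (1 + c)) 1 := ⟨le_trans hR h1, h2⟩
    have hm := aux_mono c hc hmem1 hmem2 h1
    simp only at hm
    -- translate to logb
    have key : δGV * Real.logb 2 (1 / c) - binEnt δGV ≤ δ * Real.logb 2 (1 / c) - binEnt δ := by
      rw [binEnt_eq, binEnt_eq]
      unfold Real.logb
      rw [← mul_div_assoc, ← mul_div_assoc, div_sub_div_same, div_sub_div_same]
      gcongr
    rw [← hGV]
    linarith
  · rw [hGV]; ring
end
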